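/- Let f be a multiplicative arithmetic function with nonnegative values such that for every prime power p^k one has f(p^k) = 1 + c/p + O(p^{-2}) for a fixed constant c. Then the partial sums satisfy ∑_{n ≤ t} f(n) = O(t). -/

import Mathlib

open Finset

private lemma wb_squarefree_prod_primes {S : Finset ℕ} (hS : ∀ p ∈ S, p.Prime) :
    Squarefree (∏ p ∈ S, p) := by
  classical
  induction S using Finset.induction_on with
  | empty => simpa using squarefree_one
  | @insert a S haS ih =>
    have ha := hS a (Finset.mem_insert_self a S)
    have hS' : ∀ p ∈ S, p.Prime := fun p hp => hS p (Finset.mem_insert_of_mem hp)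
    have hcop : Nat.Coprime a (∏ p ∈ S, p) := by
      apply Nat.Coprime.prod_right
      intro q hq
      exact (Nat.coprime_primes ha (hS' q hq)).mpr (by rintro rfl; exact haS hq)
    rw [Finset.prod_insert haS]
    exact (Nat.squarefree_mul hcop).mpr ⟨ha.squarefree, ih hS'⟩

private lemma wb_sqrt_prod {S : Finset ℕ} (g : ℕ → ℝ) (hg : ∀ p ∈ S, 0 ≤ g p) :
    ∏ p ∈ S, Real.sqrt (g p) = Real.sqrt (∏ p ∈ S, g p) := by
  classical
  induction S using Finset.induction_on with
  | empty => simp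
  | @insert a S haS ih =>
    rw [Finset.prod_insert haS, Finset.prod_insert haS,
      Real.sqrt_mul (hg a (Finset.mem_insert_self a S)),
      ih (fun p hp => hg p (Finset.mem_insert_of_mem hp))]

/-- Wirsing-type bound: if `f` is a nonnegative multiplicative function with
`f(p^k) = 1 + c/p + O(p⁻²)` for all prime powers, then `∑_{n ≤ t} f n = O(t)`. -/
theorem wirsing_bound (f : ℕ → ℝ) (hmul : f 1 = 1 ∧ ∀ m n : ℕ, Nat.Coprime m n → f (m * n) = f m * f n)
    (hnonneg : ∀ n : ℕ, 0 ≤ f n) (c C : ℝ)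
    (hpk : ∀ p k : ℕ, p.Prime → 1 ≤ k → |f (p ^ k) - 1 - c / p| ≤ C / (p : ℝ) ^ 2) :
    ∃ K : ℝ, ∀ t : ℝ, 2 ≤ t → ∑ n ∈ Finset.Icc 1 ⌊t⌋₊, f n ≤ K * t := by
  classical
  obtain ⟨h1, hm⟩ := hmul
  have hC : 0 ≤ C := by
    have h := hpk 2 1 Nat.prime_two le_rfl
    have h0 := abs_nonneg (f (2 ^ 1) - 1 - c / 2)
    have : ((2:ℕ):ℝ) = 2 := by norm_num
    rw [this] at h
    nlinarith
  set A : ℝ := |c| + C with hA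
  have hA0 : 0 ≤ A := by positivity
  set M : ℝ := max 1 A with hMdef
  have hM1 : (1:ℝ) ≤ M := le_max_left _ _
  have hM0 : (0:ℝ) ≤ M := le_trans zero_le_one hM1
  set m : ℕ := ⌊M ^ 2⌋₊ + 1 with hmdef
  set B : ℝ := M ^ m with hBdef
  have hB0 : (0:ℝ) ≤ B := pow_nonneg hM0 m
  set h : ℕ → ℝ := fun d => if Squarefree d then A ^ d.primeFactors.card / d else 0 with hh
  have h_nonneg : ∀ d, 0 ≤ h d := by
    intro d
    simp only [hh]
    split
    · positivity
    · exact le_rfl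
  -- bound at prime powers
  have hfpk : ∀ p k : ℕ, p.Prime → 1 ≤ k → f (p ^ k) ≤ 1 + A / p := by
    intro p k hp hk
    have hb := abs_le.mp (hpk p k hp hk)
    have hp2 : (2:ℝ) ≤ (p:ℝ) := by exact_mod_cast hp.two_le
    have hp0 : (0:ℝ) < (p:ℝ) := by linarith
    have hc : c / p ≤ |c| / p := by gcongr; exact le_abs_self c
    have hC' : C / (p:ℝ) ^ 2 ≤ C / p :=
      div_le_div_of_nonneg_left hC hp0 (by nlinarith)
    have : A / p = |c| / p + C / p := by rw [hA, add_div]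
    rw [this]
    linarith [hb.2]
  -- Step A : f n ≤ sum of h over divisors
  have stepA : ∀ n : ℕ, n ≠ 0 → f n ≤ ∑ d ∈ n.divisors, h d := by
    intro n hn
    have h0 : f n = ∏ p ∈ n.primeFactors, f (p ^ n.factorization p) := by
      rw [Nat.multiplicative_factorization f hm h1 hn, ← Nat.support_factorization]
      rfl
    have h2 : f n ≤ ∏ p ∈ n.primeFactors, (A / (p:ℝ) + 1) := by
      rw [h0]
      apply Finset.prod_le_prod (fun p _ => hnonneg _)
      intro p hp
      have hpp := Nat.prime_of_mem_primeFactors hp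
      have hk : 1 ≤ n.factorization p := by
        have : n.factorization p ≠ 0 := by
          rw [← Finsupp.mem_support_iff, Nat.support_factorization]; exact hp
        omega
      have := hfpk p _ hpp hk
      linarith
    have h3 : ∏ p ∈ n.primeFactors, (A / (p:ℝ) + 1)
        = ∑ S ∈ n.primeFactors.powerset, ∏ p ∈ S, (A / (p:ℝ)) := by
      rw [Finset.prod_add]
      simp
    have h4 : ∀ S ∈ n.primeFactors.powerset, ∏ p ∈ S, (A / (p:ℝ)) = h (∏ p ∈ S, p) := by
      intro S hS
      have hSp : ∀ p ∈ S, p.Prime := fun p hp =>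
        Nat.prime_of_mem_primeFactors (Finset.mem_powerset.mp hS hp)
      have hsf := wb_squarefree_prod_primes hSp
      have hpf : (∏ p ∈ S, p).primeFactors = S := Nat.primeFactors_prod hSp
      simp only [hh, if_pos hsf, hpf, Nat.cast_prod, Finset.prod_div_distrib,
        Finset.prod_const]
    have h5 : ∑ S ∈ n.primeFactors.powerset, h (∏ p ∈ S, p) ≤ ∑ d ∈ n.divisors, h d := by
      have hinj : ∀ S ∈ n.primeFactors.powerset, ∀ T ∈ n.primeFactors.powerset,
          (∏ p ∈ S, p) = (∏ p ∈ T, p) → S = T := by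
        intro S hS T hT hST
        have hSp : ∀ p ∈ S, p.Prime := fun p hp =>
          Nat.prime_of_mem_primeFactors (Finset.mem_powerset.mp hS hp)
        have hTp : ∀ p ∈ T, p.Prime := fun p hp =>
          Nat.prime_of_mem_primeFactors (Finset.mem_powerset.mp hT hp)
        rw [← Nat.primeFactors_prod hSp, ← Nat.primeFactors_prod hTp, hST]
      rw [← Finset.sum_image hinj]
      apply Finset.sum_le_sum_of_subset_of_nonneg
      · intro d hd
        simp only [Finset.mem_image] at hd
        obtain ⟨S, hS, rfl⟩ := hd
        rw [Nat.mem_divisors]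
        exact ⟨(Finset.prod_dvd_prod_of_subset _ _ _ (Finset.mem_powerset.mp hS)).trans
          (Nat.prod_primeFactors_dvd n), hn⟩
      · intro d _ _; exact h_nonneg d
    calc f n ≤ ∏ p ∈ n.primeFactors, (A / (p:ℝ) + 1) := h2
      _ = ∑ S ∈ n.primeFactors.powerset, ∏ p ∈ S, (A / (p:ℝ)) := h3
      _ = ∑ S ∈ n.primeFactors.powerset, h (∏ p ∈ S, p) := Finset.sum_congr rfl h4
      _ ≤ ∑ d ∈ n.divisors, h d := h5
  -- key pointwise bound
  have key : ∀ d : ℕ, Squarefree d → A ^ d.primeFactors.card ≤ B * Real.sqrt d := by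
    intro d hd
    set P := d.primeFactors with hP
    have step1 : A ^ P.card ≤ M ^ P.card := pow_le_pow_left₀ hA0 (le_max_right 1 A) _
    have hsplit : M ^ P.card
        = (∏ _p ∈ P.filter (fun p => p < m), M)
          * ∏ _p ∈ P.filter (fun p => ¬ p < m), M := by
      rw [Finset.prod_filter_mul_prod_filter_not P _ _, Finset.prod_const]
    have h1' : ∏ _p ∈ P.filter (fun p => p < m), M ≤ B := by
      rw [Finset.prod_const]
      apply pow_le_pow_right₀ hM1
      have hsub : P.filter (fun p => p < m) ⊆ Finset.range m := by
        intro p hp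
        rw [Finset.mem_filter] at hp
        rw [Finset.mem_range]
        exact hp.2
      calc (P.filter (fun p => p < m)).card
          ≤ (Finset.range m).card := Finset.card_le_card hsub
        _ = m := Finset.card_range m
    have h2' : ∏ _p ∈ P.filter (fun p => ¬ p < m), M ≤ Real.sqrt d := by
      have step : ∏ _p ∈ P.filter (fun p => ¬ p < m), M
          ≤ ∏ p ∈ P.filter (fun p => ¬ p < m), Real.sqrt p := by
        apply Finset.prod_le_prod (fun _ _ => hM0)
        intro p hp
        rw [Finset.mem_filter] at hp
        have hmp : m ≤ p := Nat.le_of_not_lt hp.2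
        have h2 : M ^ 2 < (p:ℝ) := by
          have hfl : M ^ 2 < ((⌊M ^ 2⌋₊ : ℕ) : ℝ) + 1 := Nat.lt_floor_add_one _
          have : ((m : ℕ) : ℝ) ≤ (p : ℝ) := by exact_mod_cast hmp
          rw [hmdef] at this
          push_cast at this
          linarith
        exact le_of_lt ((Real.lt_sqrt hM0).mpr h2)
      have step2 : ∏ p ∈ P.filter (fun p => ¬ p < m), Real.sqrt (p:ℝ)
          = Real.sqrt (∏ p ∈ P.filter (fun p => ¬ p < m), (p:ℝ)) :=
        wb_sqrt_prod _ (fun p _ => by positivity)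
      have hdvd : (∏ p ∈ P.filter (fun p => ¬ p < m), p) ∣ d :=
        (Finset.prod_dvd_prod_of_subset _ _ _ (Finset.filter_subset _ _)).trans
          (Nat.prod_primeFactors_dvd d)
      have hle : (∏ p ∈ P.filter (fun p => ¬ p < m), p) ≤ d :=
        Nat.le_of_dvd hd.ne_zero.bot_lt hdvd
      calc ∏ _p ∈ P.filter (fun p => ¬ p < m), M
          ≤ ∏ p ∈ P.filter (fun p => ¬ p < m), Real.sqrt p := step
        _ = Real.sqrt (∏ p ∈ P.filter (fun p => ¬ p < m), (p:ℝ)) := step2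
        _ ≤ Real.sqrt d := by
            apply Real.sqrt_le_sqrt
            rw [← Nat.cast_prod]
            exact_mod_cast hle
    calc A ^ P.card ≤ M ^ P.card := step1
      _ = _ := hsplit
      _ ≤ B * Real.sqrt d :=
          mul_le_mul h1' h2' (Finset.prod_nonneg fun _ _ => hM0) hB0
  -- summability
  have hsum : Summable (fun d : ℕ => B * (((d:ℝ) ^ ((3:ℝ)/2))⁻¹)) :=
    (Real.summable_nat_rpow_inv.mpr (by norm_num)).mul_left B
  refine ⟨∑' d : ℕ, B * (((d:ℝ) ^ ((3:ℝ)/2))⁻¹), fun t ht => ?_⟩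
  set N := ⌊t⌋₊ with hN
  have ht0 : (0:ℝ) ≤ t := by linarith
  have hNt : (N:ℝ) ≤ t := Nat.floor_le ht0
  -- pointwise bound on h d / d
  have hpt : ∀ d : ℕ, 1 ≤ d → h d / d ≤ B * (((d:ℝ) ^ ((3:ℝ)/2))⁻¹) := by
    intro d hd1
    have hd0 : (0:ℝ) < d := by exact_mod_cast hd1
    by_cases hsf : Squarefree d
    · have hk := key d hsf
      have hs0 : (0:ℝ) < Real.sqrt d := Real.sqrt_pos.mpr hd0
      have hrp : (d:ℝ) ^ ((3:ℝ)/2) = d * Real.sqrt d := by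
        have : ((3:ℝ)/2) = 1 + 1/2 := by norm_num
        rw [this, Real.rpow_add hd0, Real.rpow_one, Real.sqrt_eq_rpow]
      rw [hrp]
      simp only [hh, if_pos hsf]
      rw [div_div, div_le_iff₀ (by positivity)]
      have hss : Real.sqrt d * Real.sqrt d = d := Real.mul_self_sqrt hd0.le
      calc A ^ d.primeFactors.card ≤ B * Real.sqrt d := hk
        _ = B * ((d:ℝ) * Real.sqrt d)⁻¹ * ((d:ℝ) * (d:ℝ)) := by
            field_simp
            linear_combination B * hss
    · simp only [hh, if_neg hsf]
      rw [zero_div]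
      positivity
  -- main chain
  have icc_eq : ∀ n ∈ Finset.Icc 1 N, n.divisors = (Finset.Icc 1 N).filter (· ∣ n) := by
    intro n hn
    rw [Finset.mem_Icc] at hn
    ext d
    simp only [Nat.mem_divisors, Finset.mem_filter, Finset.mem_Icc]
    constructor
    · intro ⟨hdvd, hne⟩
      have hd1 : 1 ≤ d := Nat.one_le_iff_ne_zero.mpr (by rintro rfl; simp at hdvd; omega)
      exact ⟨⟨hd1, le_trans (Nat.le_of_dvd (by omega) hdvd) hn.2⟩, hdvd⟩
    · intro ⟨_, hdvd⟩
      exact ⟨hdvd, by omega⟩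
  calc ∑ n ∈ Finset.Icc 1 N, f n
      ≤ ∑ n ∈ Finset.Icc 1 N, ∑ d ∈ n.divisors, h d := by
        apply Finset.sum_le_sum
        intro n hn
        rw [Finset.mem_Icc] at hn
        exact stepA n (by omega)
    _ = ∑ n ∈ Finset.Icc 1 N, ∑ d ∈ Finset.Icc 1 N, if d ∣ n then h d else 0 := by
        apply Finset.sum_congr rfl
        intro n hn
        rw [icc_eq n hn, Finset.sum_filter]
    _ = ∑ d ∈ Finset.Icc 1 N, ∑ n ∈ Finset.Icc 1 N, if d ∣ n then h d else 0 :=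
        Finset.sum_comm
    _ = ∑ d ∈ Finset.Icc 1 N, h d * (N / d : ℕ) := by
        apply Finset.sum_congr rfl
        intro d _
        rw [← Finset.sum_filter, Finset.sum_const]
        have : Finset.Icc 1 N = Finset.Ioc 0 N := by
          ext x; simp [Finset.mem_Icc, Finset.mem_Ioc]; omega
        rw [this, Nat.Ioc_filter_dvd_card_eq_div]
        rw [nsmul_eq_mul, mul_comm]
    _ ≤ ∑ d ∈ Finset.Icc 1 N, B * (((d:ℝ) ^ ((3:ℝ)/2))⁻¹) * t := by
        apply Finset.sum_le_sum
        intro d hd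
        rw [Finset.mem_Icc] at hd
        have hd0 : (0:ℝ) < d := by exact_mod_cast hd.1
        have c1 : ((N / d : ℕ) : ℝ) ≤ t / d := by
          calc ((N / d : ℕ) : ℝ) ≤ (N:ℝ) / d := Nat.cast_div_le
            _ ≤ t / d := by gcongr
        calc h d * ((N / d : ℕ) : ℝ) ≤ h d * (t / d) :=
              mul_le_mul_of_nonneg_left c1 (h_nonneg d)
          _ = (h d / d) * t := by ring
          _ ≤ B * (((d:ℝ) ^ ((3:ℝ)/2))⁻¹) * t :=
              mul_le_mul_of_nonneg_right (hpt d hd.1) ht0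
    _ = (∑ d ∈ Finset.Icc 1 N, B * (((d:ℝ) ^ ((3:ℝ)/2))⁻¹)) * t := by
        rw [Finset.sum_mul]
    _ ≤ (∑' d : ℕ, B * (((d:ℝ) ^ ((3:ℝ)/2))⁻¹)) * t := by
        apply mul_le_mul_of_nonneg_right _ ht0
        apply Summable.sum_le_tsum _ (fun d _ => by positivity) hsum
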